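/- Under the Markov assumption X_S − X_0 − X_T for disjoint S,T ⊆ L, for any l ∈ L and S ⊆ L\{l}, v(S∪{l}) − v(S) = I(X_l; X_0) − I(X_l; X_{(L\S)\{l}}), where v(S) = I(X_S; X_0 | X_{L\S}). -/
import Mathlib


noncomputable section
open Finset
open scoped Classical BigOperators

/-- Probability of an event under a pmf on a finite sample space. -/
def Pr {Ω : Type} [Fintype Ω] (p : Ω → ℝ) (E : Ω → Prop) : ℝ :=
  ∑ ω : Ω, if E ω then p ω else 0

/-- `p` is a probability mass function. -/
def IsPMF {Ω : Type} [Fintype Ω] (p : Ω → ℝ) : Prop :=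
  (∀ ω, 0 ≤ p ω) ∧ (∑ ω : Ω, p ω) = 1

/-- Shannon entropy of a finitely-valued random variable `X` under pmf `p`. -/
def ent {Ω α : Type} [Fintype Ω] [Fintype α] (p : Ω → ℝ) (X : Ω → α) : ℝ :=
  -∑ a : α, Pr p (fun ω => X ω = a) * Real.log (Pr p (fun ω => X ω = a))

/-- Conditional Shannon entropy `H(X|Y)`. -/
def condEnt {Ω α β : Type} [Fintype Ω] [Fintype α] [Fintype β]
    (p : Ω → ℝ) (X : Ω → α) (Y : Ω → β) : ℝ :=
  ent p (fun ω => (X ω, Y ω)) - ent p Y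

/-- Mutual information `I(X;Y)`. -/
def mi {Ω α β : Type} [Fintype Ω] [Fintype α] [Fintype β]
    (p : Ω → ℝ) (X : Ω → α) (Y : Ω → β) : ℝ :=
  ent p X + ent p Y - ent p (fun ω => (X ω, Y ω))

/-- Conditional mutual information `I(X;Y|Z)`. -/
def cmi {Ω α β γ : Type} [Fintype Ω] [Fintype α] [Fintype β] [Fintype γ]
    (p : Ω → ℝ) (X : Ω → α) (Y : Ω → β) (Z : Ω → γ) : ℝ :=
  ent p (fun ω => (X ω, Z ω)) + ent p (fun ω => (Y ω, Z ω))
    - ent p (fun ω => (X ω, Y ω, Z ω)) - ent p Z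

/-- `X` and `Y` are conditionally independent given `Z` (Markov chain `X - Z - Y`). -/
def CondIndep {Ω α β γ : Type} [Fintype Ω] [Fintype α] [Fintype β] [Fintype γ]
    (p : Ω → ℝ) (X : Ω → α) (Y : Ω → β) (Z : Ω → γ) : Prop :=
  ∀ (a : α) (b : β) (c : γ),
    Pr p (fun ω => X ω = a ∧ Y ω = b ∧ Z ω = c) * Pr p (fun ω => Z ω = c)
      = Pr p (fun ω => X ω = a ∧ Z ω = c) * Pr p (fun ω => Y ω = b ∧ Z ω = c)

/-- The tuple random variable `X_S = (X_l)_{l ∈ S}`. -/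
def XS {Ω L 𝒳 : Type} [Fintype Ω] (X : L → Ω → 𝒳) (S : Finset L) :
    Ω → (S → 𝒳) :=
  fun ω i => X i ω

/-- The value function of the secret-key generation game:
`v(S) = I(X_S; X_0 | X_{L\S})`. -/
def vGame {Ω L 𝒳 β : Type} [Fintype Ω] [Fintype L] [DecidableEq L] [Fintype 𝒳] [Fintype β]
    (p : Ω → ℝ) (X : L → Ω → 𝒳) (X0 : Ω → β) (S : Finset L) : ℝ :=
  cmi p (XS X S) X0 (XS X Sᶜ)

section Helpers
variable {Ω : Type} [Fintype Ω]

lemma Pr_congr (p : Ω → ℝ) {E F : Ω → Prop} (h : ∀ ω, E ω ↔ F ω) : Pr p E = Pr p F := by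
  unfold Pr; exact Finset.sum_congr rfl fun ω _ => by simp [h ω]

lemma Pr_nonneg {p : Ω → ℝ} (hp : ∀ ω, 0 ≤ p ω) (E : Ω → Prop) : 0 ≤ Pr p E :=
  Finset.sum_nonneg fun ω _ => by by_cases h : E ω <;> simp [h, hp ω]

lemma Pr_mono {p : Ω → ℝ} (hp : ∀ ω, 0 ≤ p ω) {E F : Ω → Prop} (h : ∀ ω, E ω → F ω) :
    Pr p E ≤ Pr p F := by
  refine Finset.sum_le_sum fun ω _ => ?_
  by_cases hE : E ω
  · simp [hE, h ω hE]
  · by_cases hF : F ω <;> simp [hE, hF, hp ω]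

lemma Pr_sum_fiber {β : Type} [Fintype β] (p : Ω → ℝ) (A : Ω → Prop) (Y : Ω → β) :
    ∑ b : β, Pr p (fun ω => A ω ∧ Y ω = b) = Pr p A := by
  unfold Pr
  rw [Finset.sum_comm]
  refine Finset.sum_congr rfl fun ω _ => ?_
  by_cases h : A ω <;> simp [h]

lemma ent_comp {α γ' : Type} [Fintype α] [Fintype γ'] (p : Ω → ℝ)
    {X : Ω → α} {Y : Ω → γ'} {e : α → γ'} (he : Function.Injective e)
    (hXY : ∀ ω, Y ω = e (X ω)) : ent p Y = ent p X := by
  unfold ent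
  congr 1
  have key : ∀ a : α, Pr p (fun ω => Y ω = e a) = Pr p (fun ω => X ω = a) :=
    fun a => Pr_congr p fun ω => by rw [hXY]; exact he.eq_iff
  rw [← Finset.sum_subset (Finset.subset_univ (Finset.univ.image e))]
  · rw [Finset.sum_image (fun a _ a' _ h => he h)]
    exact Finset.sum_congr rfl fun a _ => by rw [key]
  · intro b _ hb
    have hz : Pr p (fun ω => Y ω = b) = 0 := by
      refine Finset.sum_eq_zero fun ω _ => ?_
      have : Y ω ≠ b := fun h => hb (by
        simp only [Finset.mem_image, Finset.mem_univ, true_and]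
        exact ⟨X ω, by rw [← hXY, h]⟩)
      simp [this]
    rw [hz, zero_mul]

end Helpers
section CMI
variable {Ω : Type} [Fintype Ω]

lemma Pr_pos {p : Ω → ℝ} (hp : ∀ ω, 0 ≤ p ω) {E : Ω → Prop} {ω : Ω}
    (hE : E ω) (hpω : 0 < p ω) : 0 < Pr p E := by
  have h1 : (if E ω then p ω else 0) ≤ Pr p E := by
    refine Finset.single_le_sum (f := fun ω => if E ω then p ω else 0)
      (fun i _ => ?_) (Finset.mem_univ ω)
    by_cases h : E i <;> simp [h, hp i]
  rw [if_pos hE] at h1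
  linarith

lemma sum_Pr_mul {α : Type} [Fintype α] (p : Ω → ℝ) (X : Ω → α) (g : α → ℝ) :
    ∑ a : α, Pr p (fun ω => X ω = a) * g a = ∑ ω : Ω, p ω * g (X ω) := by
  unfold Pr
  simp_rw [Finset.sum_mul]
  rw [Finset.sum_comm]
  refine Finset.sum_congr rfl fun ω _ => ?_
  rw [Finset.sum_eq_single (X ω)]
  · simp
  · intro b _ hb; simp [Ne.symm hb]
  · simp

lemma ent_eq_exp {α : Type} [Fintype α] (p : Ω → ℝ) (X : Ω → α) :
    ent p X = -∑ ω : Ω, p ω * Real.log (Pr p (fun ω' => X ω' = X ω)) := by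
  unfold ent
  rw [sum_Pr_mul p X (fun a => Real.log (Pr p (fun ω' => X ω' = a)))]

lemma cmi_eq_zero {α β γ : Type} [Fintype α] [Fintype β] [Fintype γ]
    (p : Ω → ℝ) (hp : IsPMF p) {X : Ω → α} {Y : Ω → β} {Z : Ω → γ}
    (h : CondIndep p X Y Z) : cmi p X Y Z = 0 := by
  obtain ⟨hp0, -⟩ := hp
  unfold cmi
  rw [ent_eq_exp p (fun ω => (X ω, Z ω)), ent_eq_exp p (fun ω => (Y ω, Z ω)),
    ent_eq_exp p (fun ω => (X ω, Y ω, Z ω)), ent_eq_exp p Z]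
  have hxz : ∀ ω : Ω, Pr p (fun ω' => (X ω', Z ω') = (X ω, Z ω))
      = Pr p (fun ω' => X ω' = X ω ∧ Z ω' = Z ω) :=
    fun ω => Pr_congr p fun ω' => by simp [Prod.ext_iff]
  have hyz : ∀ ω : Ω, Pr p (fun ω' => (Y ω', Z ω') = (Y ω, Z ω))
      = Pr p (fun ω' => Y ω' = Y ω ∧ Z ω' = Z ω) :=
    fun ω => Pr_congr p fun ω' => by simp [Prod.ext_iff]
  have hxyz : ∀ ω : Ω, Pr p (fun ω' => (X ω', Y ω', Z ω') = (X ω, Y ω, Z ω))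
      = Pr p (fun ω' => X ω' = X ω ∧ Y ω' = Y ω ∧ Z ω' = Z ω) :=
    fun ω => Pr_congr p fun ω' => by simp [Prod.ext_iff]
  simp_rw [hxz, hyz, hxyz]
  rw [show ∀ A B C D : ℝ, -A + -B - -C - -D = (C + D) - (A + B) from fun A B C D => by ring]
  rw [← Finset.sum_add_distrib, ← Finset.sum_add_distrib, ← Finset.sum_sub_distrib]
  refine Finset.sum_eq_zero fun ω _ => ?_
  by_cases hω : p ω = 0
  · simp [hω]
  have hpω : 0 < p ω := lt_of_le_of_ne (hp0 ω) (Ne.symm hω)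
  have h3 : 0 < Pr p (fun ω' => X ω' = X ω ∧ Y ω' = Y ω ∧ Z ω' = Z ω) :=
    Pr_pos hp0 ⟨rfl, rfl, rfl⟩ hpω
  have hz : 0 < Pr p (fun ω' => Z ω' = Z ω) := Pr_pos hp0 rfl hpω
  have hxz' : 0 < Pr p (fun ω' => X ω' = X ω ∧ Z ω' = Z ω) := Pr_pos hp0 ⟨rfl, rfl⟩ hpω
  have hyz' : 0 < Pr p (fun ω' => Y ω' = Y ω ∧ Z ω' = Z ω) := Pr_pos hp0 ⟨rfl, rfl⟩ hpω
  have hci := h (X ω) (Y ω) (Z ω)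
  have hlog : Real.log (Pr p (fun ω' => X ω' = X ω ∧ Y ω' = Y ω ∧ Z ω' = Z ω))
      + Real.log (Pr p (fun ω' => Z ω' = Z ω))
      = Real.log (Pr p (fun ω' => X ω' = X ω ∧ Z ω' = Z ω))
      + Real.log (Pr p (fun ω' => Y ω' = Y ω ∧ Z ω' = Z ω)) := by
    rw [← Real.log_mul (ne_of_gt h3) (ne_of_gt hz), ← Real.log_mul (ne_of_gt hxz') (ne_of_gt hyz'), hci]
  rw [← mul_add, ← mul_add, hlog, sub_self]

end CMI
section Glue
variable {L 𝒳 : Type} [DecidableEq L]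

def glue (a : L) (R T : Finset L) (hR : ∀ i ∈ T, i ≠ a → i ∈ R) :
    𝒳 × (R → 𝒳) → (T → 𝒳) :=
  fun wv i => if h : (i : L) = a then wv.1 else wv.2 ⟨i, hR i i.2 h⟩

lemma glue_injective (a : L) (R T : Finset L) (hR : ∀ i ∈ T, i ≠ a → i ∈ R)
    (ha : a ∈ T) (hsub : R ⊆ T) (haR : a ∉ R) :
    Function.Injective (glue (𝒳 := 𝒳) a R T hR) := by
  rintro ⟨w, v⟩ ⟨w', v'⟩ h
  have hw : w = w' := by
    have h1 := congrFun h ⟨a, ha⟩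
    simpa [glue] using h1
  have hv : v = v' := by
    funext j
    have hj : (j : L) ≠ a := fun e => haR (e ▸ j.2)
    have h1 := congrFun h ⟨j, hsub j.2⟩
    simpa [glue, hj] using h1
  simp [hw, hv]

lemma glue_XS {Ω : Type} [Fintype Ω] (X : L → Ω → 𝒳) (a : L) (R T : Finset L)
    (hR : ∀ i ∈ T, i ≠ a → i ∈ R) (ω : Ω) :
    XS X T ω = glue a R T hR (X a ω, XS X R ω) := by
  funext i
  rcases i with ⟨i, hi⟩
  show X i ω = _
  by_cases h : i = a
  · subst h; simp [glue]
  · simp only [glue, dif_neg h]; rfl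

end Glue

section CI
variable {Ω : Type} [Fintype Ω]

lemma condIndep_comp_left {α α' β γ : Type} [Fintype α] [Fintype α'] [Fintype β] [Fintype γ]
    {p : Ω → ℝ} {X : Ω → α} {X' : Ω → α'} {Y : Ω → β} {Z : Ω → γ}
    (e : α → α') (he : Function.Injective e) (hX : ∀ ω, X' ω = e (X ω))
    (h : CondIndep p X' Y Z) : CondIndep p X Y Z := by
  intro a b c
  have h1 := h (e a) b c
  have e1 : Pr p (fun ω => X' ω = e a ∧ Y ω = b ∧ Z ω = c)
      = Pr p (fun ω => X ω = a ∧ Y ω = b ∧ Z ω = c) :=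
    Pr_congr p fun ω => by rw [hX ω, he.eq_iff]
  have e2 : Pr p (fun ω => X' ω = e a ∧ Z ω = c)
      = Pr p (fun ω => X ω = a ∧ Z ω = c) :=
    Pr_congr p fun ω => by rw [hX ω, he.eq_iff]
  rwa [e1, e2] at h1

end CI
/-- under the Markov assumption, for `l ∉ S`,
`v(S∪{l}) - v(S) = I(X_l;X_0) - I(X_l; X_{(L\S)\{l}})`. -/
theorem statement10 {Ω L 𝒳 β : Type} [Fintype Ω] [Fintype L] [DecidableEq L] [Fintype 𝒳] [Fintype β]
    (p : Ω → ℝ) (hp : IsPMF p) (X : L → Ω → 𝒳) (X0 : Ω → β)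
    (hM : ∀ S T : Finset L, Disjoint S T → CondIndep p (XS X S) (XS X T) X0)
    (l : L) (S : Finset L) (hl : l ∉ S) :
    vGame p X X0 (insert l S) - vGame p X X0 S
      = mi p (X l) X0 - mi p (X l) (XS X (Sᶜ.erase l)) := by
  have hlK : l ∈ insert l S := Finset.mem_insert_self l S
  have hlC : l ∈ Sᶜ := Finset.mem_compl.mpr hl
  have hRK : ∀ i ∈ insert l S, i ≠ l → i ∈ S := fun i hi hne =>
    (Finset.mem_insert.mp hi).resolve_left hne
  have hRC : ∀ i ∈ Sᶜ, i ≠ l → i ∈ Sᶜ.erase l := fun i hi hne =>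
    Finset.mem_erase.mpr ⟨hne, hi⟩
  have gKinj := glue_injective (𝒳 := 𝒳) l S (insert l S) hRK hlK (Finset.subset_insert l S) hl
  have gCinj := glue_injective (𝒳 := 𝒳) l (Sᶜ.erase l) Sᶜ hRC hlC (Finset.erase_subset l Sᶜ)
    (Finset.notMem_erase l Sᶜ)
  have hK := glue_XS X l S (insert l S) hRK
  have hC := glue_XS X l (Sᶜ.erase l) Sᶜ hRC
  -- entropy recodings
  have E1 : ent p (fun ω => (XS X (insert l S) ω, XS X (Sᶜ.erase l) ω))
      = ent p (fun ω => ((X l ω, XS X S ω), XS X (Sᶜ.erase l) ω)) := by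
    refine ent_comp p (e := Prod.map (glue l S (insert l S) hRK) id)
      (gKinj.prodMap Function.injective_id) fun ω => by rw [hK ω]; rfl
  have E2 : ent p (fun ω => (XS X S ω, XS X Sᶜ ω))
      = ent p (fun ω => ((X l ω, XS X S ω), XS X (Sᶜ.erase l) ω)) := by
    refine ent_comp p
      (e := fun x : (𝒳 × (S → 𝒳)) × ((Sᶜ.erase l : Finset L) → 𝒳) =>
        (x.1.2, glue l (Sᶜ.erase l) Sᶜ hRC (x.1.1, x.2))) ?_ fun ω => by rw [hC ω]
    rintro ⟨⟨w, u⟩, v⟩ ⟨⟨w', u'⟩, v'⟩ hx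
    simp only [Prod.mk.injEq] at hx
    obtain ⟨h1, h2⟩ := hx
    have h3 := gCinj h2
    simp only [Prod.mk.injEq] at h3
    simp [h1, h3.1, h3.2]
  have E3 : ent p (fun ω => (XS X (insert l S) ω, X0 ω, XS X (Sᶜ.erase l) ω))
      = ent p (fun ω => ((X l ω, XS X S ω), X0 ω, XS X (Sᶜ.erase l) ω)) := by
    refine ent_comp p (e := Prod.map (glue l S (insert l S) hRK) id)
      (gKinj.prodMap Function.injective_id) fun ω => by rw [hK ω]; rfl
  have E4 : ent p (fun ω => (XS X S ω, X0 ω, XS X Sᶜ ω))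
      = ent p (fun ω => ((X l ω, XS X S ω), X0 ω, XS X (Sᶜ.erase l) ω)) := by
    refine ent_comp p
      (e := fun x : (𝒳 × (S → 𝒳)) × β × ((Sᶜ.erase l : Finset L) → 𝒳) =>
        (x.1.2, x.2.1, glue l (Sᶜ.erase l) Sᶜ hRC (x.1.1, x.2.2))) ?_ fun ω => by rw [hC ω]
    rintro ⟨⟨w, u⟩, z, v⟩ ⟨⟨w', u'⟩, z', v'⟩ hx
    simp only [Prod.mk.injEq] at hx
    obtain ⟨h1, h2, h3⟩ := hx
    have h4 := gCinj h3
    simp only [Prod.mk.injEq] at h4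
    simp [h1, h2, h4.1, h4.2]
  have E5 : ent p (XS X Sᶜ) = ent p (fun ω => (X l ω, XS X (Sᶜ.erase l) ω)) :=
    ent_comp p gCinj fun ω => hC ω
  have E7 : ent p (fun ω => (X0 ω, XS X Sᶜ ω))
      = ent p (fun ω => (X0 ω, X l ω, XS X (Sᶜ.erase l) ω)) := by
    refine ent_comp p (e := Prod.map id (glue l (Sᶜ.erase l) Sᶜ hRC))
      (Function.injective_id.prodMap gCinj) fun ω => by rw [hC ω]; rfl
  -- conditional independence of X_l and X_{Sᶜ \ l} given X0
  have hCIl : CondIndep p (X l) (XS X (Sᶜ.erase l)) X0 := by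
    have hdisj : Disjoint ({l} : Finset L) (Sᶜ.erase l) := by
      simp [Finset.disjoint_singleton_left]
    refine condIndep_comp_left (e := fun w => (fun _ => w : ({l} : Finset L) → 𝒳))
      (fun w w' h => congrFun h ⟨l, Finset.mem_singleton_self l⟩) ?_
      (hM {l} (Sᶜ.erase l) hdisj)
    intro ω
    funext i
    have hi : (i : L) = l := Finset.mem_singleton.mp i.2
    show X (i : L) ω = X l ω
    rw [hi]
  have hz0 := cmi_eq_zero p hp hCIl
  unfold cmi at hz0
  have sw1 : ent p (fun ω => (XS X (Sᶜ.erase l) ω, X0 ω))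
      = ent p (fun ω => (X0 ω, XS X (Sᶜ.erase l) ω)) :=
    ent_comp p Prod.swap_injective fun ω => rfl
  have sw2 : ent p (fun ω => (X l ω, XS X (Sᶜ.erase l) ω, X0 ω))
      = ent p (fun ω => (X0 ω, X l ω, XS X (Sᶜ.erase l) ω)) := by
    refine ent_comp p (e := fun x : β × 𝒳 × ((Sᶜ.erase l : Finset L) → 𝒳) =>
      (x.2.1, x.2.2, x.1)) ?_ fun ω => rfl
    rintro ⟨z, w, v⟩ ⟨z', w', v'⟩ hx
    simp only [Prod.mk.injEq] at hx
    simp [hx.1, hx.2.1, hx.2.2]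
  rw [sw1, sw2] at hz0
  unfold vGame cmi mi
  rw [Finset.compl_insert]
  rw [E1, E2, E3, E4, E5, E7]
  linarith [hz0]
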